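/- Let x, y ∈ S_{n+1} with x ≤ y, and let L = {z ∈ [x,y] : z^{-1}(0) = x^{-1}(0)}. Then L is a lower order ideal of [x,y] of the form [x, c] for some c ∈ [x,y]; that is, L has a unique maximal element c and L = {z ∈ [x,y] : z ≤ c}. -/

import Mathlib

open Polynomial

/-- Number of inversions (the Coxeter length) of a permutation of `Fin n`. -/
def invCount {n : ℕ} (x : Equiv.Perm (Fin n)) : ℕ :=
  (Finset.univ.filter (fun p : Fin n × Fin n => p.1 < p.2 ∧ x p.2 < x p.1)).card

/-- Bruhat order on the symmetric group `S_n = Perm (Fin n)`: `x ≤ y` iff there is an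
upward path from `x` to `y` in the Bruhat graph (edges: multiplication by a transposition,
oriented by increasing length). -/
def BruhatLE {n : ℕ} (x y : Equiv.Perm (Fin n)) : Prop :=
  Relation.ReflTransGen
    (fun u v => (∃ i j : Fin n, i ≠ j ∧ v = Equiv.swap i j * u) ∧ invCount u < invCount v)
    x y

def BruhatLT {n : ℕ} (x y : Equiv.Perm (Fin n)) : Prop :=
  BruhatLE x y ∧ x ≠ y


theorem Equiv.Perm.apply_inv_self {α : Type*} (f : Equiv.Perm α) (x : α) : f (f⁻¹ x) = x :=
  f.apply_symm_apply x

theorem Equiv.Perm.inv_apply_self {α : Type*} (f : Equiv.Perm α) (x : α) : f⁻¹ (f x) = x :=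
  f.symm_apply_apply x

namespace CosetIv


open Finset Equiv

variable {n : ℕ}

/-- prefix rank matrix: number of positions `a < i` with value `≥ j`. -/
def rk (w : Equiv.Perm (Fin (n+1))) (i j : ℕ) : ℕ :=
  (Finset.univ.filter fun a : Fin (n+1) => a.val < i ∧ j ≤ (w a).val).card

def DotLE (x y : Equiv.Perm (Fin (n+1))) : Prop := ∀ i j : ℕ, rk x i j ≤ rk y i j

lemma DotLE.refl (x : Equiv.Perm (Fin (n+1))) : DotLE x x := fun _ _ => le_rfl

lemma DotLE.trans {x y z : Equiv.Perm (Fin (n+1))} (h1 : DotLE x y) (h2 : DotLE y z) :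
    DotLE x z := fun i j => (h1 i j).trans (h2 i j)

lemma rk_card_sum (w : Equiv.Perm (Fin (n+1))) (i j : ℕ) :
    rk w i j = ∑ a : Fin (n+1), if a.val < i ∧ j ≤ (w a).val then 1 else 0 := by
  rw [rk, Finset.card_filter]

lemma sum_split_two (p q : Fin (n+1)) (hpq : p ≠ q) (f : Fin (n+1) → ℕ) :
    ∑ a : Fin (n+1), f a = f p + f q + ∑ a ∈ Finset.univ \ {p, q}, f a := by
  have h : ({p, q} : Finset (Fin (n+1))) ⊆ Finset.univ := Finset.subset_univ _
  rw [← Finset.sum_sdiff h, Finset.sum_pair hpq]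
  ring

/-- The key rank identity for a (position) transposition applied on the right. -/
lemma rk_mul_swap (w : Equiv.Perm (Fin (n+1))) (p q : Fin (n+1))
    (hpq : p.val < q.val) (hw : (w p).val < (w q).val) (i j : ℕ) :
    rk (w * Equiv.swap p q) i j =
      rk w i j + (if p.val < i ∧ i ≤ q.val ∧ (w p).val < j ∧ j ≤ (w q).val then 1 else 0) := by
  have hne : p ≠ q := fun h => by simp [h] at hpq
  rw [rk_card_sum, rk_card_sum, sum_split_two p q hne, sum_split_two p q hne
    (fun a => if a.val < i ∧ j ≤ (w a).val then 1 else 0)]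
  have hsd : ∀ a ∈ Finset.univ \ ({p, q} : Finset (Fin (n+1))),
      (if a.val < i ∧ j ≤ ((w * Equiv.swap p q) a).val then 1 else 0)
      = (if a.val < i ∧ j ≤ (w a).val then 1 else 0) := by
    intro a ha
    simp only [Finset.mem_sdiff, Finset.mem_insert, Finset.mem_singleton] at ha
    have h1 : a ≠ p := fun h => ha.2 (Or.inl h)
    have h2 : a ≠ q := fun h => ha.2 (Or.inr h)
    rw [Equiv.Perm.mul_apply, Equiv.swap_apply_of_ne_of_ne h1 h2]
  rw [Finset.sum_congr rfl hsd]
  have e1 : (w * Equiv.swap p q) p = w q := by rw [Equiv.Perm.mul_apply, Equiv.swap_apply_left]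
  have e2 : (w * Equiv.swap p q) q = w p := by rw [Equiv.Perm.mul_apply, Equiv.swap_apply_right]
  rw [e1, e2]
  split_ifs <;> omega

/-- rank splitting along values. -/
lemma rk_split (w : Equiv.Perm (Fin (n+1))) (i : ℕ) (v : Fin (n+1)) :
    rk w i v.val = rk w i (v.val + 1) + (if (w⁻¹ v).val < i then 1 else 0) := by
  rw [rk_card_sum, rk_card_sum]
  have h3 : (if (w⁻¹ v).val < i then 1 else 0)
      = ∑ a : Fin (n+1), if a = w⁻¹ v ∧ a.val < i then 1 else 0 := by
    rw [Finset.sum_eq_single_of_mem (w⁻¹ v) (Finset.mem_univ _)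
      (fun b _ hb => by simp only [Equiv.Perm.inv_def] at hb; simp [hb])]
    simp
  rw [h3, ← Finset.sum_add_distrib]
  apply Finset.sum_congr rfl
  intro a _
  by_cases hav : a = w⁻¹ v
  · subst hav
    have hval : (w (w⁻¹ v)).val = v.val := by simp
    split_ifs <;> omega
  · have : w a ≠ v := fun h => hav (by rw [← h]; simp)
    have hval : (w a).val ≠ v.val := fun h => this (Fin.ext h)
    split_ifs <;> omega

lemma rk_zero_eq (w w' : Equiv.Perm (Fin (n+1))) (i : ℕ) : rk w i 0 = rk w' i 0 := by
  unfold rk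
  congr 1
  apply Finset.filter_congr
  intro a _
  simp

lemma rk_agree_below {x y : Equiv.Perm (Fin (n+1))} {i : ℕ}
    (h : ∀ a : Fin (n+1), a.val < i → x a = y a) (j : ℕ) : rk x i j = rk y i j := by
  unfold rk
  congr 1
  apply Finset.filter_congr
  intro a _
  by_cases ha : a.val < i
  · simp [ha, h a ha]
  · simp [ha]

/-- position of 0 is monotone under dot order. -/
lemma pos_zero_le_of_dotLE {x y : Equiv.Perm (Fin (n+1))} (h : DotLE x y) :
    (x⁻¹ 0).val ≤ (y⁻¹ 0).val := by
  set i := (y⁻¹ 0).val + 1 with hi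
  have hx := rk_split x i 0
  have hy := rk_split y i 0
  have h0 : rk x i (0 : Fin (n+1)).val = rk y i (0:Fin (n+1)).val := by
    simp only [Fin.val_zero]
    exact rk_zero_eq x y i
  have h1 := h i 1
  simp only [Fin.val_zero, Nat.zero_add] at hx hy h0
  by_contra hc
  simp only [not_le] at hc
  rw [if_pos (by omega)] at hy
  rw [if_neg (by omega)] at hx
  omega



open Finset Equiv

variable {n : ℕ}


lemma invCount_swap_lt (w : Equiv.Perm (Fin (n+1))) (p q : Fin (n+1))
    (hpq : p.val < q.val) (hw : (w p).val < (w q).val) :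
    invCount w < invCount (w * Equiv.swap p q) := by
  have hne : p ≠ q := fun h => by simp [h] at hpq
  set σ := Equiv.swap p q with hσdef
  have hσp : σ p = q := Equiv.swap_apply_left p q
  have hσq : σ q = p := Equiv.swap_apply_right p q
  have hσo : ∀ r : Fin (n+1), r ≠ p → r ≠ q → σ r = r :=
    fun r h1 h2 => Equiv.swap_apply_of_ne_of_ne h1 h2
  have hσσ : ∀ r : Fin (n+1), σ (σ r) = r := fun r => Equiv.swap_apply_self p q r
  set T := Finset.univ.filter
    (fun x : Fin (n+1) × Fin (n+1) => σ x.1 < σ x.2 ∧ w x.2 < w x.1) with hTdef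
  set S := Finset.univ.filter
    (fun x : Fin (n+1) × Fin (n+1) => x.1 < x.2 ∧ w x.2 < w x.1) with hSdef
  have hcard : invCount (w * σ) = T.card := by
    unfold invCount
    refine (Finset.card_bij (fun x _ => (σ x.1, σ x.2)) ?_ ?_ ?_).symm
    · rintro ⟨a, b⟩ hx
      simp only [hTdef, Finset.mem_filter, Finset.mem_univ, true_and] at hx
      simp only [Finset.mem_filter, Finset.mem_univ, true_and]
      refine ⟨hx.1, ?_⟩
      simp only [Equiv.Perm.mul_apply, hσσ]
      exact hx.2
    · rintro ⟨a, b⟩ _ ⟨a', b'⟩ _ h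
      simp only [Prod.mk.injEq] at h
      have h1 : a = a' := σ.injective h.1
      have h2 : b = b' := σ.injective h.2
      simp [h1, h2]
    · rintro ⟨a, b⟩ hb
      simp only [Finset.mem_filter, Finset.mem_univ, true_and] at hb
      refine ⟨(σ a, σ b), ?_, ?_⟩
      · simp only [hTdef, Finset.mem_filter, Finset.mem_univ, true_and, hσσ]
        refine ⟨hb.1, ?_⟩
        simpa only [Equiv.Perm.mul_apply] using hb.2
      · simp [hσσ]
  have hS : invCount w = S.card := rfl
  rw [hS, hcard]
  classical
  set ψ : Fin (n+1) × Fin (n+1) → Fin (n+1) × Fin (n+1) :=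
    fun x => if x.1 = p ∧ x.2.val < q.val then (q, x.2)
      else if x.2 = q ∧ p.val < x.1.val then (x.1, p) else x with hψdef
  have hψ1 : ∀ a b : Fin (n+1), a = p → b.val < q.val → ψ (a, b) = (q, b) := by
    intro a b h1 h2; simp only [hψdef]; rw [if_pos ⟨h1, h2⟩]
  have hψ2 : ∀ a b : Fin (n+1), ¬(a = p ∧ b.val < q.val) → b = q → p.val < a.val →
      ψ (a, b) = (a, p) := by
    intro a b h0 h1 h2; simp only [hψdef]; rw [if_neg h0, if_pos ⟨h1, h2⟩]
  have hψ3 : ∀ a b : Fin (n+1), ¬(a = p ∧ b.val < q.val) → ¬(b = q ∧ p.val < a.val) →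
      ψ (a, b) = (a, b) := by
    intro a b h0 h1; simp only [hψdef]; rw [if_neg h0, if_neg h1]
  have hqp_mem : (q, p) ∈ T := by
    simp only [hTdef, Finset.mem_filter, Finset.mem_univ, true_and, hσp, hσq]
    exact ⟨Fin.lt_def.mpr hpq, Fin.lt_def.mpr hw⟩
  have memT : ∀ a b : Fin (n+1), (σ a).val < (σ b).val → (w b).val < (w a).val →
      (a, b) ∈ T := by
    intro a b h1 h2
    simp only [hTdef, Finset.mem_filter, Finset.mem_univ, true_and]
    exact ⟨Fin.lt_def.mpr h1, Fin.lt_def.mpr h2⟩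
  have hmaps : ∀ x ∈ S, ψ x ∈ T.erase (q, p) := by
    rintro ⟨a, b⟩ hx
    simp only [hSdef, Finset.mem_filter, Finset.mem_univ, true_and] at hx
    obtain ⟨hab, hwab⟩ := hx
    rw [Fin.lt_def] at hab
    rw [Fin.lt_def] at hwab
    by_cases h1 : a = p ∧ b.val < q.val
    · obtain ⟨hap, hbq⟩ := h1
      have hpb : p.val < b.val := hap ▸ hab
      have hbnp : b ≠ p := fun h => by rw [h] at hpb; omega
      have hbnq : b ≠ q := fun h => by rw [h] at hbq; omega
      rw [hψ1 a b hap hbq]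
      rw [Finset.mem_erase]
      constructor
      · intro h; rw [Prod.mk.injEq] at h; exact hbnp h.2
      · apply memT
        · rw [hσq, hσo b hbnp hbnq]; omega
        · have hwa : (w a).val = (w p).val := by rw [hap]
          omega
    · by_cases h2 : b = q ∧ p.val < a.val
      · obtain ⟨hbq, hpa⟩ := h2
        have haq : a.val < q.val := hbq ▸ hab
        have hanp : a ≠ p := fun h => by rw [h] at hpa; omega
        have hanq : a ≠ q := fun h => by rw [h] at haq; omega
        rw [hψ2 a b h1 hbq hpa]
        rw [Finset.mem_erase]
        constructor
        · intro h; rw [Prod.mk.injEq] at h; exact hanq h.1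
        · apply memT
          · rw [hσp, hσo a hanp hanq]; omega
          · have : (w q).val < (w a).val := hbq ▸ hwab
            omega
      · rw [hψ3 a b h1 h2]
        rw [Finset.mem_erase]
        constructor
        · intro h; rw [Prod.mk.injEq] at h
          obtain ⟨h3, h4⟩ := h
          rw [h3, h4] at hab; omega
        · apply memT _ _ _ hwab
          by_cases hap : a = p
          · have hbge : q.val ≤ b.val := by
              by_contra hcon
              exact h1 ⟨hap, by omega⟩
            have hbnq : b ≠ q := by
              intro h
              rw [hap, h] at hwab
              omega
            have hbnp : b ≠ p := fun h => by rw [hap, h] at hab; omega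
            rw [hap, hσp, hσo b hbnp hbnq]
            have : b.val ≠ q.val := fun h => hbnq (Fin.ext h)
            omega
          · by_cases haq : a = q
            · have hbnp : b ≠ p := fun h => by
                rw [haq, h] at hab; omega
              have hbnq : b ≠ q := fun h => by rw [haq, h] at hab; omega
              rw [haq, hσq, hσo b hbnp hbnq]
              rw [haq] at hab; omega
            · rw [hσo a hap haq]
              by_cases hbp : b = p
              · rw [hbp, hσp]
                rw [hbp] at hab; omega
              · by_cases hbq : b = q
                · have hale : ¬ (p.val < a.val) := fun h => h2 ⟨hbq, h⟩
                  have : a.val ≠ p.val := fun h => hap (Fin.ext h)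
                  rw [hbq, hσq]
                  omega
                · rw [hσo b hbp hbq]
                  exact hab
  have hinj : Set.InjOn ψ S := by
    have hv : ∀ {u v : Fin (n+1)}, u = v → u.val = v.val := fun h => by rw [h]
    rintro ⟨a, b⟩ hx ⟨a', b'⟩ hx' heq
    simp only [hSdef, Finset.coe_filter, Set.mem_setOf_eq, Finset.mem_univ, true_and] at hx hx'
    obtain ⟨hab, hwab⟩ := hx
    obtain ⟨hab', hwab'⟩ := hx'
    rw [Fin.lt_def] at hab hab'
    by_cases c1 : a = p ∧ b.val < q.val
    · rw [hψ1 a b c1.1 c1.2] at heq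
      by_cases c1' : a' = p ∧ b'.val < q.val
      · rw [hψ1 a' b' c1'.1 c1'.2] at heq
        rw [Prod.mk.injEq] at heq
        rw [Prod.mk.injEq]
        exact ⟨c1.1.trans c1'.1.symm, heq.2⟩
      · by_cases c2' : b' = q ∧ p.val < a'.val
        · rw [hψ2 a' b' c1' c2'.1 c2'.2] at heq
          rw [Prod.mk.injEq] at heq
          have e1 := hv heq.1
          have e2 := hv heq.2
          have e3 := hv c1.1
          omega
        · rw [hψ3 a' b' c1' c2'] at heq
          rw [Prod.mk.injEq] at heq
          have e1 := hv heq.1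
          have e2 := hv heq.2
          have hc := c1.2
          omega
    · by_cases c2 : b = q ∧ p.val < a.val
      · rw [hψ2 a b c1 c2.1 c2.2] at heq
        by_cases c1' : a' = p ∧ b'.val < q.val
        · rw [hψ1 a' b' c1'.1 c1'.2] at heq
          rw [Prod.mk.injEq] at heq
          have e1 := hv heq.1
          have e2 := hv c2.1
          omega
        · by_cases c2' : b' = q ∧ p.val < a'.val
          · rw [hψ2 a' b' c1' c2'.1 c2'.2] at heq
            rw [Prod.mk.injEq] at heq
            rw [Prod.mk.injEq]
            exact ⟨heq.1, c2.1.trans c2'.1.symm⟩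
          · rw [hψ3 a' b' c1' c2'] at heq
            rw [Prod.mk.injEq] at heq
            have e1 := hv heq.1
            have e2 := hv heq.2
            have e3 := c2.2
            omega
      · rw [hψ3 a b c1 c2] at heq
        by_cases c1' : a' = p ∧ b'.val < q.val
        · rw [hψ1 a' b' c1'.1 c1'.2] at heq
          rw [Prod.mk.injEq] at heq
          have e1 := hv heq.1
          have e2 := hv heq.2
          have e3 := c1'.2
          omega
        · by_cases c2' : b' = q ∧ p.val < a'.val
          · rw [hψ2 a' b' c1' c2'.1 c2'.2] at heq
            rw [Prod.mk.injEq] at heq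
            have e1 := hv heq.1
            have e2 := hv heq.2
            have e3 := c2'.2
            omega
          · rw [hψ3 a' b' c1' c2'] at heq
            exact heq
  calc S.card ≤ (T.erase (q, p)).card := Finset.card_le_card_of_injOn ψ hmaps hinj
    _ < T.card := Finset.card_erase_lt_of_mem hqp_mem


/-! ### more rank lemmas -/

lemma rk_succ (w : Equiv.Perm (Fin (n+1))) (i j : ℕ) (hi : i < n+1) :
    rk w (i+1) j = rk w i j + if j ≤ (w ⟨i, hi⟩).val then 1 else 0 := by
  rw [rk_card_sum, rk_card_sum]
  have h3 : (if j ≤ (w ⟨i, hi⟩).val then 1 else 0)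
      = ∑ a : Fin (n+1), if a = ⟨i, hi⟩ ∧ j ≤ (w a).val then 1 else 0 := by
    rw [Finset.sum_eq_single_of_mem (⟨i, hi⟩ : Fin (n+1)) (Finset.mem_univ _)
      (fun b _ hb => by simp [hb])]
    simp
  rw [h3, ← Finset.sum_add_distrib]
  apply Finset.sum_congr rfl
  intro a _
  have hv : ((⟨i, hi⟩ : Fin (n+1)) : Fin (n+1)).val = i := rfl
  simp only [Fin.ext_iff, hv]
  split_ifs <;> omega

def cnt (w : Equiv.Perm (Fin (n+1))) (i1 i2 j : ℕ) : ℕ :=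
  (Finset.univ.filter fun a : Fin (n+1) => i1 ≤ a.val ∧ a.val < i2 ∧ j ≤ (w a).val).card

lemma rk_split_cnt (w : Equiv.Perm (Fin (n+1))) (i1 i2 j : ℕ) (h : i1 ≤ i2) :
    rk w i2 j = rk w i1 j + cnt w i1 i2 j := by
  rw [rk_card_sum, rk_card_sum, cnt, Finset.card_filter, ← Finset.sum_add_distrib]
  apply Finset.sum_congr rfl
  intro a _
  split_ifs <;> omega

lemma cnt_mono_val {w : Equiv.Perm (Fin (n+1))} {i1 i2 j j' : ℕ}
    (h : ∀ a : Fin (n+1), i1 ≤ a.val → a.val < i2 → j ≤ (w a).val → j' ≤ (w a).val) :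
    cnt w i1 i2 j ≤ cnt w i1 i2 j' := by
  apply Finset.card_le_card
  intro a ha
  simp only [Finset.mem_filter, Finset.mem_univ, true_and] at ha ⊢
  exact ⟨ha.1, ha.2.1, h a ha.1 ha.2.1 ha.2.2⟩

lemma rk_stable (w : Equiv.Perm (Fin (n+1))) (i j : ℕ) (h : n+1 ≤ i) :
    rk w i j = rk w (n+1) j := by
  unfold rk
  congr 1
  apply Finset.filter_congr
  intro a _
  have := a.isLt
  constructor <;> (intro hh; exact ⟨by omega, hh.2⟩)

lemma rk_big (w : Equiv.Perm (Fin (n+1))) (i j : ℕ) (h : n+1 ≤ j) : rk w i j = 0 := by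
  unfold rk
  rw [Finset.card_eq_zero, Finset.filter_eq_empty_iff]
  intro a _
  have := (w a).isLt
  intro hh
  omega

lemma eq_of_rk_eq {x y : Equiv.Perm (Fin (n+1))} (h : ∀ i j : ℕ, rk x i j = rk y i j) :
    x = y := by
  apply Equiv.ext
  intro a
  have key : ∀ j : ℕ, (j ≤ (x a).val) ↔ (j ≤ (y a).val) := by
    intro j
    have h1 := rk_succ x a.val j a.isLt
    have h2 := rk_succ y a.val j a.isLt
    have h3 := h (a.val + 1) j
    have h4 := h a.val j
    have ha : (⟨a.val, a.isLt⟩ : Fin (n+1)) = a := Fin.ext rfl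
    rw [ha] at h1 h2
    constructor <;> (intro hj; by_contra hc; rw [if_pos hj] at *; first
      | (rw [if_neg hc] at h2; omega) | (rw [if_neg hc] at h1; omega))
  have e1 := (key (x a).val).mp le_rfl
  have e2 := (key (y a).val).mpr le_rfl
  exact Fin.ext (le_antisymm e1 e2)

/-! ### swap of values vs swap of positions -/

lemma swap_values_eq (u : Equiv.Perm (Fin (n+1))) (p q : Fin (n+1)) :
    Equiv.swap (u p) (u q) * u = u * Equiv.swap p q := by
  ext a
  simp only [Equiv.Perm.mul_apply]
  by_cases hap : a = p
  · subst hap; rw [Equiv.swap_apply_left, Equiv.swap_apply_left]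
  · by_cases haq : a = q
    · subst haq; rw [Equiv.swap_apply_right, Equiv.swap_apply_right]
    · rw [Equiv.swap_apply_of_ne_of_ne hap haq,
        Equiv.swap_apply_of_ne_of_ne (fun h => hap (u.injective h))
          (fun h => haq (u.injective h))]

lemma val_lt_of_invCount_lt {u : Equiv.Perm (Fin (n+1))} {p q : Fin (n+1)}
    (hpq : p.val < q.val) (h : invCount u < invCount (u * Equiv.swap p q)) :
    (u p).val < (u q).val := by
  by_contra hc
  push_neg at hc
  have hne : u p ≠ u q := fun he => (by simp [u.injective he] at hpq : False)
  have hlt : (u q).val < (u p).val := lt_of_le_of_ne hc (fun he => hne (Fin.ext he.symm))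
  set v := u * Equiv.swap p q with hv
  have h1 : (v p).val < (v q).val := by
    simp only [hv, Equiv.Perm.mul_apply, Equiv.swap_apply_left, Equiv.swap_apply_right]
    exact hlt
  have h2 := invCount_swap_lt v p q hpq h1
  have h3 : v * Equiv.swap p q = u := by
    rw [hv, mul_assoc, Equiv.swap_mul_self, mul_one]
  rw [h3] at h2
  omega

lemma dotLE_of_swap_step {u : Equiv.Perm (Fin (n+1))} {p q : Fin (n+1)}
    (hpq : p.val < q.val) (h : invCount u < invCount (u * Equiv.swap p q)) :
    DotLE u (u * Equiv.swap p q) := by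
  intro i j
  rw [rk_mul_swap u p q hpq (val_lt_of_invCount_lt hpq h) i j]
  exact Nat.le_add_right _ _

lemma dotLE_of_bruhatLE {x y : Equiv.Perm (Fin (n+1))} (h : BruhatLE x y) : DotLE x y := by
  induction h with
  | refl => exact DotLE.refl x
  | tail hsub hstep ih =>
      rename_i u v
      obtain ⟨⟨i, j, hij, rfl⟩, hinv⟩ := hstep
      refine DotLE.trans ih ?_
      set p := u⁻¹ i with hp
      set q := u⁻¹ j with hq
      have hup : u p = i := u.apply_inv_self i
      have huq : u q = j := u.apply_inv_self j
      have hpqne : p ≠ q := fun h => hij (by rw [← hup, ← huq, h])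
      have hkey : Equiv.swap i j * u = u * Equiv.swap p q := by
        rw [← hup, ← huq]; exact swap_values_eq u p q
      rw [hkey] at hinv ⊢
      rcases lt_trichotomy p.val q.val with hlt | heq | hgt
      · exact dotLE_of_swap_step hlt hinv
      · exact absurd (Fin.ext heq) hpqne
      · rw [Equiv.swap_comm] at hinv ⊢
        exact dotLE_of_swap_step hgt hinv

/-! ### from dot order to Bruhat order -/

def phi (w : Equiv.Perm (Fin (n+1))) : ℕ :=
  ∑ c ∈ Finset.range (n+2) ×ˢ Finset.range (n+2), rk w c.1 c.2

lemma phi_lt_of_dotLE_ne {x y : Equiv.Perm (Fin (n+1))} (h : DotLE x y) (hne : x ≠ y) :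
    phi x < phi y := by
  apply Finset.sum_lt_sum (fun c _ => h c.1 c.2)
  by_contra hall
  push_neg at hall
  apply hne
  apply eq_of_rk_eq
  intro i j
  have key : ∀ i' j' : ℕ, i' < n+2 → j' < n+2 → rk x i' j' = rk y i' j' := by
    intro i' j' hi hj
    have := hall (i', j') (by simp [Finset.mem_product, Finset.mem_range]; omega)
    exact le_antisymm (h i' j') this
  rcases le_or_gt (n+1) j with hj | hj
  · rw [rk_big x i j hj, rk_big y i j hj]
  rcases le_or_gt (n+1) i with hi | hi
  · rw [rk_stable x i j hi, rk_stable y i j hi]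
    exact key (n+1) j (by omega) (by omega)
  · exact key i j (by omega) (by omega)

lemma bruhat_of_dot_aux (y : Equiv.Perm (Fin (n+1))) :
    ∀ d (x : Equiv.Perm (Fin (n+1))), DotLE x y → phi y ≤ phi x + d → BruhatLE x y := by
  intro d
  induction d with
  | zero =>
      intro x h hd
      have hxy : x = y := by
        by_contra hne
        have := phi_lt_of_dotLE_ne h hne
        omega
      rw [hxy]
      exact Relation.ReflTransGen.refl
  | succ d ih =>
      intro x h hd
      by_cases hxy : x = y
      · rw [hxy]
        exact Relation.ReflTransGen.refl
      -- find first difference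
      have hDne : (Finset.univ.filter fun a : Fin (n+1) => x a ≠ y a).Nonempty := by
        by_contra hc
        rw [Finset.not_nonempty_iff_eq_empty, Finset.filter_eq_empty_iff] at hc
        exact hxy (Equiv.ext (fun a => by
          by_contra hne
          exact (hc (Finset.mem_univ a)) hne))
      set k := (Finset.univ.filter fun a : Fin (n+1) => x a ≠ y a).min' hDne with hk
      have hkmem : x k ≠ y k := by
        have := Finset.min'_mem _ hDne
        rw [Finset.mem_filter] at this
        exact this.2
      have hagree : ∀ a : Fin (n+1), a.val < k.val → x a = y a := by
        intro a ha
        by_contra hne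
        have : k ≤ a := Finset.min'_le _ a (Finset.mem_filter.mpr ⟨Finset.mem_univ a, hne⟩)
        rw [Fin.le_def] at this
        omega
      have hpre : ∀ j, rk x k.val j = rk y k.val j := fun j => rk_agree_below hagree j
      have hks : (⟨k.val, k.isLt⟩ : Fin (n+1)) = k := Fin.ext rfl
      have hxk_lt : (x k).val < (y k).val := by
        have h1 := rk_succ x k.val ((x k).val) k.isLt
        have h2 := rk_succ y k.val ((x k).val) k.isLt
        rw [hks] at h1 h2
        have h3 := h (k.val + 1) ((x k).val)
        have h4 := hpre ((x k).val)
        rw [if_pos le_rfl] at h1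
        have hle : (x k).val ≤ (y k).val := by
          by_contra hc
          rw [if_neg (by omega)] at h2
          omega
        exact lt_of_le_of_ne hle (fun he => hkmem (Fin.ext he))
      -- the set M
      have hMne : (Finset.univ.filter fun a : Fin (n+1) =>
          k.val < a.val ∧ (x k).val < (x a).val ∧ (x a).val ≤ (y k).val).Nonempty := by
        refine ⟨x⁻¹ (y k), ?_⟩
        rw [Finset.mem_filter]
        have hxm : x (x⁻¹ (y k)) = y k := x.apply_inv_self _
        refine ⟨Finset.mem_univ _, ?_, by rw [hxm]; exact hxk_lt, by rw [hxm]⟩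
        rcases lt_trichotomy (x⁻¹ (y k)).val k.val with hlt | heq | hgt
        · exfalso
          have := hagree _ hlt
          rw [hxm] at this
          have : x⁻¹ (y k) = k := y.injective this.symm
          omega
        · exfalso
          have : x⁻¹ (y k) = k := Fin.ext heq
          rw [this] at hxm
          exact hkmem hxm
        · exact hgt
      set m := (Finset.univ.filter fun a : Fin (n+1) =>
          k.val < a.val ∧ (x k).val < (x a).val ∧ (x a).val ≤ (y k).val).min' hMne with hm
      have hmmem := Finset.min'_mem _ hMne
      rw [Finset.mem_filter] at hmmem
      obtain ⟨-, hkm, hxkm, hxmyk⟩ := hmmem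
      rw [← hm] at hkm hxkm hxmyk
      have hmmin : ∀ a : Fin (n+1), a.val < m.val →
          ¬(k.val < a.val ∧ (x k).val < (x a).val ∧ (x a).val ≤ (y k).val) := by
        intro a ha hcon
        have : m ≤ a := Finset.min'_le _ a (Finset.mem_filter.mpr ⟨Finset.mem_univ a, hcon⟩)
        rw [Fin.le_def] at this
        omega
      set x' := x * Equiv.swap k m with hx'
      -- dot domination of x' by y
      have hdx' : DotLE x' y := by
        intro i j
        rw [hx', rk_mul_swap x k m hkm hxkm i j]
        by_cases hband : k.val < i ∧ i ≤ m.val ∧ (x k).val < j ∧ j ≤ (x m).val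
        · rw [if_pos hband]
          obtain ⟨hb1, hb2, hb3, hb4⟩ := hband
          -- rk x i j + 1 ≤ rk y i j
          have e1 : rk x i j = rk x (k.val+1) j + cnt x (k.val+1) i j :=
            rk_split_cnt x (k.val+1) i j (by omega)
          have e2 : rk x (k.val+1) j = rk y k.val j := by
            have := rk_succ x k.val j k.isLt
            rw [hks, if_neg (by omega)] at this
            rw [this, hpre j]
            omega
          have e3 : cnt x (k.val+1) i j ≤ cnt x (k.val+1) i ((y k).val + 1) := by
            apply cnt_mono_val
            intro a h1 h2 h3
            have hna := hmmin a (by omega)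
            push_neg at hna
            have := hna (by omega) (by omega)
            omega
          have e4 : cnt x (k.val+1) i ((y k).val+1) ≤ cnt y (k.val+1) i ((y k).val+1) := by
            have f1 : rk x i ((y k).val+1) = rk x (k.val+1) ((y k).val+1)
                + cnt x (k.val+1) i ((y k).val+1) := rk_split_cnt _ _ _ _ (by omega)
            have f2 : rk y i ((y k).val+1) = rk y (k.val+1) ((y k).val+1)
                + cnt y (k.val+1) i ((y k).val+1) := rk_split_cnt _ _ _ _ (by omega)
            have f3 : rk x (k.val+1) ((y k).val+1) = rk y (k.val+1) ((y k).val+1) := by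
              have g1 := rk_succ x k.val ((y k).val+1) k.isLt
              have g2 := rk_succ y k.val ((y k).val+1) k.isLt
              rw [hks] at g1 g2
              rw [if_neg (by omega)] at g1
              rw [if_neg (by omega)] at g2
              rw [g1, g2, hpre]
            have f4 := h i ((y k).val+1)
            omega
          have e5 : cnt y (k.val+1) i ((y k).val+1) ≤ cnt y (k.val+1) i j := by
            apply cnt_mono_val
            intro a _ _ h3
            omega
          have e6 : rk y i j = rk y (k.val+1) j + cnt y (k.val+1) i j :=
            rk_split_cnt y (k.val+1) i j (by omega)
          have e7 : rk y (k.val+1) j = rk y k.val j + 1 := by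
            have := rk_succ y k.val j k.isLt
            rw [hks, if_pos (by omega)] at this
            omega
          omega
        · rw [if_neg hband]
          simpa using h i j
      -- invCount increases
      have hinv : invCount x < invCount x' := invCount_swap_lt x k m hkm hxkm
      -- step relation
      have hstep : (∃ i j : Fin (n+1), i ≠ j ∧ x' = Equiv.swap i j * x) ∧
          invCount x < invCount x' := by
        refine ⟨⟨x k, x m, ?_, ?_⟩, hinv⟩
        · intro hcon
          have hkm2 : k.val = m.val := by rw [x.injective hcon]
          omega
        · rw [hx', swap_values_eq]
      -- phi strictly increases
      have hphi : phi x < phi x' := by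
        apply Finset.sum_lt_sum
        · intro c _
          rw [hx', rk_mul_swap x k m hkm hxkm c.1 c.2]
          exact Nat.le_add_right _ _
        · refine ⟨(k.val+1, (x k).val+1), ?_, ?_⟩
          · simp only [Finset.mem_product, Finset.mem_range]
            constructor
            · have := k.isLt; omega
            · have := (x k).isLt; omega
          · rw [hx', rk_mul_swap x k m hkm hxkm]
            rw [if_pos ⟨by omega, by omega, by omega, by omega⟩]
            omega
      have hd' : phi y ≤ phi x' + d := by omega
      exact Relation.ReflTransGen.head hstep (ih x' hdx' hd')

lemma bruhatLE_of_dotLE {x y : Equiv.Perm (Fin (n+1))} (h : DotLE x y) : BruhatLE x y :=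
  bruhat_of_dot_aux y (phi y) x h (by omega)

/-! ### left swap (value swap) rank identity and lifting lemmas -/

section Lift

variable {a b : Fin (n+1)}

lemma rk_swap_left (hab : a.val + 1 = b.val) (w : Equiv.Perm (Fin (n+1))) (i j : ℕ) :
    rk (Equiv.swap a b * w) i j + (if (w⁻¹ b).val < i ∧ j = b.val then 1 else 0)
      = rk w i j + (if (w⁻¹ a).val < i ∧ j = b.val then 1 else 0) := by
  have hne : a ≠ b := fun h => by rw [h] at hab; omega
  have hcne : w⁻¹ a ≠ w⁻¹ b := fun h => hne (w⁻¹.injective h)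
  rw [rk_card_sum, rk_card_sum,
    sum_split_two (w⁻¹ a) (w⁻¹ b) hcne, sum_split_two (w⁻¹ a) (w⁻¹ b) hcne]
  have hsd : ∀ c ∈ Finset.univ \ ({w⁻¹ a, w⁻¹ b} : Finset (Fin (n+1))),
      (if c.val < i ∧ j ≤ ((Equiv.swap a b * w) c).val then 1 else 0)
      = (if c.val < i ∧ j ≤ (w c).val then 1 else 0) := by
    intro c hc
    simp only [Finset.mem_sdiff, Finset.mem_insert, Finset.mem_singleton] at hc
    have h1 : w c ≠ a := fun h => hc.2 (Or.inl (by rw [← h]; simp))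
    have h2 : w c ≠ b := fun h => hc.2 (Or.inr (by rw [← h]; simp))
    rw [Equiv.Perm.mul_apply, Equiv.swap_apply_of_ne_of_ne h1 h2]
  rw [Finset.sum_congr rfl hsd]
  have e1 : (Equiv.swap a b * w) (w⁻¹ a) = b := by
    rw [Equiv.Perm.mul_apply, w.apply_inv_self, Equiv.swap_apply_left]
  have e2 : (Equiv.swap a b * w) (w⁻¹ b) = a := by
    rw [Equiv.Perm.mul_apply, w.apply_inv_self, Equiv.swap_apply_right]
  have e3 : w (w⁻¹ a) = a := w.apply_inv_self a
  have e4 : w (w⁻¹ b) = b := w.apply_inv_self b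
  rw [e1, e2, e3, e4]
  split_ifs <;> omega

lemma rk_swap_left_ne (hab : a.val + 1 = b.val) (w : Equiv.Perm (Fin (n+1))) (i j : ℕ)
    (hj : j ≠ b.val) :
    rk (Equiv.swap a b * w) i j = rk w i j := by
  have := rk_swap_left hab w i j
  rw [if_neg (fun h => hj h.2), if_neg (fun h => hj h.2)] at this
  omega

lemma inv_swap_left (w : Equiv.Perm (Fin (n+1))) (c : Fin (n+1)) :
    (Equiv.swap a b * w)⁻¹ c = w⁻¹ (Equiv.swap a b c) := by
  rw [mul_inv_rev, Equiv.Perm.mul_apply, Equiv.swap_inv]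

lemma inv_swap_left_a (w : Equiv.Perm (Fin (n+1))) :
    (Equiv.swap a b * w)⁻¹ a = w⁻¹ b := by rw [inv_swap_left, Equiv.swap_apply_left]

lemma inv_swap_left_b (w : Equiv.Perm (Fin (n+1))) :
    (Equiv.swap a b * w)⁻¹ b = w⁻¹ a := by rw [inv_swap_left, Equiv.swap_apply_right]

lemma inv_swap_left_other (w : Equiv.Perm (Fin (n+1))) (c : Fin (n+1))
    (h1 : c ≠ a) (h2 : c ≠ b) :
    (Equiv.swap a b * w)⁻¹ c = w⁻¹ c := by
  rw [inv_swap_left, Equiv.swap_apply_of_ne_of_ne h1 h2]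

lemma swap_swap_left (w : Equiv.Perm (Fin (n+1))) :
    Equiv.swap a b * (Equiv.swap a b * w) = w := by
  rw [← mul_assoc, Equiv.swap_mul_self, one_mul]

lemma rk_split' (hab : a.val + 1 = b.val) (w : Equiv.Perm (Fin (n+1))) (i : ℕ) :
    rk w i a.val = rk w i b.val + (if (w⁻¹ a).val < i then 1 else 0) := by
  have := rk_split w i a
  rw [hab] at this
  exact this

/-- lifting lemma (b): `sy < y`, `sv > v`, `v ≤ y` implies `v ≤ sy`. -/
lemma lift_b (hab : a.val + 1 = b.val) {v y : Equiv.Perm (Fin (n+1))}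
    (hy : (y⁻¹ b).val < (y⁻¹ a).val) (hv : (v⁻¹ a).val < (v⁻¹ b).val)
    (h : DotLE v y) : DotLE v (Equiv.swap a b * y) := by
  intro i j
  by_cases hj : j = b.val
  · subst hj
    have hid := rk_swap_left hab y i b.val
    simp only [and_true] at hid
    have f1 := rk_split' hab v i
    have f2 := rk_split' hab y i
    have f3 := rk_split v i b
    have f4 := rk_split y i b
    have f5 := h i a.val
    have f6 := h i b.val
    have f7 := h i (b.val + 1)
    split_ifs at hid f1 f2 f3 f4 <;> omega
  · rw [rk_swap_left_ne hab y i j hj]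
    exact h i j

/-- lifting lemma (a): `sy < y`, `sv < v`, `v ≤ y` implies `sv ≤ sy`. -/
lemma lift_a (hab : a.val + 1 = b.val) {v y : Equiv.Perm (Fin (n+1))}
    (hy : (y⁻¹ b).val < (y⁻¹ a).val) (hv : (v⁻¹ b).val < (v⁻¹ a).val)
    (h : DotLE v y) : DotLE (Equiv.swap a b * v) (Equiv.swap a b * y) := by
  intro i j
  by_cases hj : j = b.val
  · subst hj
    have hidv := rk_swap_left hab v i b.val
    have hidy := rk_swap_left hab y i b.val
    simp only [and_true] at hidv hidy
    have f1 := rk_split' hab v i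
    have f2 := rk_split' hab y i
    have f3 := rk_split v i b
    have f4 := rk_split y i b
    have f5 := h i a.val
    have f6 := h i b.val
    have f7 := h i (b.val + 1)
    split_ifs at hidv hidy f1 f2 f3 f4 <;> omega
  · rw [rk_swap_left_ne hab v i j hj, rk_swap_left_ne hab y i j hj]
    exact h i j

/-- lifting lemma (a'): `su > u`, `sw > w`, `u ≤ w` implies `su ≤ sw`. -/
lemma lift_a' (hab : a.val + 1 = b.val) {u w : Equiv.Perm (Fin (n+1))}
    (hu : (u⁻¹ a).val < (u⁻¹ b).val) (hw : (w⁻¹ a).val < (w⁻¹ b).val)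
    (h : DotLE u w) : DotLE (Equiv.swap a b * u) (Equiv.swap a b * w) := by
  intro i j
  by_cases hj : j = b.val
  · subst hj
    have hidv := rk_swap_left hab u i b.val
    have hidy := rk_swap_left hab w i b.val
    simp only [and_true] at hidv hidy
    have f1 := rk_split' hab u i
    have f2 := rk_split' hab w i
    have f3 := rk_split u i b
    have f4 := rk_split w i b
    have f5 := h i a.val
    have f6 := h i b.val
    have f7 := h i (b.val + 1)
    split_ifs at hidv hidy f1 f2 f3 f4 <;> omega
  · rw [rk_swap_left_ne hab u i j hj, rk_swap_left_ne hab w i j hj]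
    exact h i j

lemma desc_le (hab : a.val + 1 = b.val) {y : Equiv.Perm (Fin (n+1))}
    (hy : (y⁻¹ b).val < (y⁻¹ a).val) : DotLE (Equiv.swap a b * y) y := by
  intro i j
  by_cases hj : j = b.val
  · subst hj
    have hid := rk_swap_left hab y i b.val
    simp only [and_true] at hid
    split_ifs at hid <;> omega
  · rw [rk_swap_left_ne hab y i j hj]

lemma asc_le (hab : a.val + 1 = b.val) {y : Equiv.Perm (Fin (n+1))}
    (hy : (y⁻¹ a).val < (y⁻¹ b).val) : DotLE y (Equiv.swap a b * y) := by
  intro i j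
  by_cases hj : j = b.val
  · subst hj
    have hid := rk_swap_left hab y i b.val
    simp only [and_true] at hid
    split_ifs at hid <;> omega
  · rw [rk_swap_left_ne hab y i j hj]

/-- a descent strictly lowers `invCount`. -/
lemma invCount_desc (hab : a.val + 1 = b.val) {y : Equiv.Perm (Fin (n+1))}
    (hy : (y⁻¹ b).val < (y⁻¹ a).val) :
    invCount (Equiv.swap a b * y) < invCount y := by
  set p := y⁻¹ b with hp
  set q := y⁻¹ a with hq
  have h1 : Equiv.swap a b * y = y * Equiv.swap p q := by
    have : Equiv.swap (y p) (y q) * y = y * Equiv.swap p q := swap_values_eq y p q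
    rw [hp, hq, y.apply_inv_self, y.apply_inv_self] at this
    rw [← this, Equiv.swap_comm]
  have h2 : ((Equiv.swap a b * y) p).val < ((Equiv.swap a b * y) q).val := by
    rw [h1]
    simp only [Equiv.Perm.mul_apply, Equiv.swap_apply_left, Equiv.swap_apply_right]
    rw [hp, hq, y.apply_inv_self, y.apply_inv_self]
    omega
  have h3 := invCount_swap_lt (Equiv.swap a b * y) p q hy h2
  have h4 : Equiv.swap a b * y * Equiv.swap p q = y := by
    rw [h1, mul_assoc, Equiv.swap_mul_self, mul_one]
  rw [h4] at h3
  exact h3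

end Lift

/-! ### the base case: the only left descent of `y` is at value 0 -/

section Grass

variable {y : Equiv.Perm (Fin (n+1))}
  (hc2 : ∀ v w : Fin (n+1), 0 < v.val → v.val + 1 = w.val → (y⁻¹ v).val < (y⁻¹ w).val)

include hc2

lemma grassA1 : ∀ v : Fin (n+1), v.val ≤ (y⁻¹ v).val + 1 := by
  suffices h : ∀ (m : ℕ) (v : Fin (n+1)), v.val = m → m ≤ (y⁻¹ v).val + 1 by
    intro v; exact h v.val v rfl
  intro m
  induction m with
  | zero => intro v _; omega
  | succ m ih =>
      intro v hv
      by_cases hm : m = 0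
      · omega
      · have hmlt : m < n + 1 := by have := v.isLt; omega
        have h1 := hc2 ⟨m, hmlt⟩ v (by simpa using Nat.pos_of_ne_zero hm) (by simp [hv])
        have h2 := ih ⟨m, hmlt⟩ rfl
        omega

lemma grassA2 : ∀ v : Fin (n+1), 0 < v.val → (y⁻¹ v).val ≤ v.val := by
  suffices h : ∀ (d : ℕ) (v : Fin (n+1)), 0 < v.val → n + 1 ≤ v.val + d →
      (y⁻¹ v).val ≤ v.val by
    intro v hv; exact h (n+1) v hv (by omega)
  intro d
  induction d with
  | zero => intro v _ hd; have := v.isLt; omega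
  | succ d ih =>
      intro v hv hd
      by_cases hvn : v.val = n
      · have := (y⁻¹ v).isLt; omega
      · have hlt : v.val + 1 < n + 1 := by have := v.isLt; omega
        have h1 := hc2 v ⟨v.val + 1, hlt⟩ hv rfl
        have h2 := ih ⟨v.val + 1, hlt⟩ (Nat.succ_pos _) (by show n + 1 ≤ v.val + 1 + d; omega)
        have h3 : (⟨v.val + 1, hlt⟩ : Fin (n+1)).val = v.val + 1 := rfl
        omega

lemma grassA3 : ∀ (d : ℕ) (v u : Fin (n+1)), 0 < v.val → (y⁻¹ v).val = v.val →
    u.val = v.val + d → (y⁻¹ u).val = u.val := by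
  intro d
  induction d with
  | zero =>
      intro v u hv he hu
      have : u = v := Fin.ext (by omega)
      rw [this, he]
  | succ d ih =>
      intro v u hv he hu
      have htlt : v.val + d < n + 1 := by have := u.isLt; omega
      have h1 := ih v ⟨v.val + d, htlt⟩ hv he rfl
      have h2 := hc2 ⟨v.val + d, htlt⟩ u (by show 0 < v.val + d; omega)
        (by show v.val + d + 1 = u.val; omega)
      have h3 := grassA2 hc2 u (by omega)
      have h4 : (⟨v.val + d, htlt⟩ : Fin (n+1)).val = v.val + d := rfl
      omega

lemma grassA4 : ∀ v : Fin (n+1), 0 < v.val → v.val ≤ (y⁻¹ 0).val →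
    (y⁻¹ v).val + 1 = v.val := by
  intro v hv hvb
  have d1 := grassA1 hc2 v
  have d2 := grassA2 hc2 v hv
  by_cases he : (y⁻¹ v).val = v.val
  · exfalso
    have hble : (0 : Fin (n+1)).val < (y⁻¹ 0).val := by
      have : (0 : Fin (n+1)).val = 0 := rfl
      omega
    have h3 := grassA3 hc2 ((y⁻¹ 0).val - v.val) v ⟨(y⁻¹ 0).val, (y⁻¹ 0).isLt⟩ hv he
      (by show (y⁻¹ 0).val = v.val + ((y⁻¹ 0).val - v.val); omega)
    have h3' : (⟨(y⁻¹ 0).val, (y⁻¹ 0).isLt⟩ : Fin (n+1)).val = (y⁻¹ 0).val := rfl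
    have : y⁻¹ (⟨(y⁻¹ 0).val, (y⁻¹ 0).isLt⟩ : Fin (n+1)) = y⁻¹ 0 := Fin.ext (h3.trans h3')
    have h4 : (⟨(y⁻¹ 0).val, (y⁻¹ 0).isLt⟩ : Fin (n+1)) = 0 := y⁻¹.injective this
    have h5 : (y⁻¹ 0).val = 0 := by
      have := congrArg Fin.val h4
      simpa using this
    omega
  · omega

lemma grassA5 : ∀ v : Fin (n+1), (y⁻¹ 0).val < v.val → (y⁻¹ v).val = v.val := by
  intro v hbv
  have hv : 0 < v.val := by omega
  have d1 := grassA1 hc2 v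
  have d2 := grassA2 hc2 v hv
  by_cases he : (y⁻¹ v).val = v.val
  · exact he
  · exfalso
    have hulim : (y⁻¹ 0).val + 1 < n + 1 := by have := v.isLt; omega
    set u : Fin (n+1) := ⟨(y⁻¹ 0).val + 1, hulim⟩ with hu
    have huval : u.val = (y⁻¹ 0).val + 1 := rfl
    have hu0 : 0 < u.val := by omega
    by_cases he2 : (y⁻¹ u).val = u.val
    · have h3 := grassA3 hc2 (v.val - u.val) u v hu0 he2 (by omega)
      exact he h3
    · have e1 := grassA1 hc2 u
      have e2 := grassA2 hc2 u hu0
      have e3 : (y⁻¹ u).val = (y⁻¹ 0).val := by omega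
      have : y⁻¹ u = y⁻¹ 0 := Fin.ext e3
      have h4 : u = 0 := y⁻¹.injective this
      have h5 := congrArg Fin.val h4
      rw [huval] at h5
      simp at h5
  
lemma grass_pos : ∀ c : Fin (n+1), c.val < (y⁻¹ 0).val → (y c).val = c.val + 1 := by
  intro c hc
  have hvlt : c.val + 1 < n + 1 := by have := (y⁻¹ 0).isLt; omega
  have h1 := grassA4 hc2 ⟨c.val + 1, hvlt⟩ (Nat.succ_pos _)
    (by show c.val + 1 ≤ (y⁻¹ 0).val; omega)
  have h1' : (⟨c.val + 1, hvlt⟩ : Fin (n+1)).val = c.val + 1 := rfl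
  rw [h1'] at h1
  have h2 : y⁻¹ (⟨c.val + 1, hvlt⟩ : Fin (n+1)) = c := Fin.ext (by omega)
  have h3 := congrArg y h2
  rw [y.apply_inv_self] at h3
  rw [← h3]

end Grass

lemma count_band (lo hi : ℕ) (hhi : hi ≤ n+1) :
    (Finset.univ.filter fun a : Fin (n+1) => lo ≤ a.val ∧ a.val < hi).card = hi - lo := by
  rw [← Nat.card_Ico lo hi]
  apply Finset.card_nbij (i := fun (a : Fin (n+1)) => a.val)
  · intro a ha
    simp only [Finset.coe_filter, Finset.mem_coe, Finset.mem_filter, Finset.mem_univ, true_and, Set.mem_setOf_eq] at ha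
    simpa only [Finset.mem_coe, Finset.mem_Ico] using ha
  · intro a _ b _ hab
    exact Fin.ext hab
  · intro v hv
    simp only [Finset.coe_Ico, Set.mem_Ico] at hv
    refine ⟨⟨v, by omega⟩, ?_, rfl⟩
    simp only [Finset.coe_filter, Set.mem_setOf_eq, Finset.mem_univ, true_and]
    exact ⟨hv.1, hv.2⟩

section Grass2

variable {y : Equiv.Perm (Fin (n+1))}
  (hc2 : ∀ v w : Fin (n+1), 0 < v.val → v.val + 1 = w.val → (y⁻¹ v).val < (y⁻¹ w).val)

include hc2

lemma grass_rk (i j : ℕ) (hj1 : 1 ≤ j) (hji : j ≤ i) (hib : i ≤ (y⁻¹ 0).val) :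
    rk y i j = i - j + 1 := by
  have hfe : (Finset.univ.filter fun a : Fin (n+1) => a.val < i ∧ j ≤ (y a).val)
      = Finset.univ.filter fun a : Fin (n+1) => j - 1 ≤ a.val ∧ a.val < i := by
    apply Finset.filter_congr
    intro a _
    by_cases ha : a.val < i
    · have := grass_pos hc2 a (by omega)
      simp only [ha, true_and, and_true]
      omega
    · simp only [ha, false_and, and_false]
  rw [rk, hfe, count_band (j-1) i (by have := (y⁻¹ 0).isLt; omega)]
  omega

lemma grass_rk_empty (i : ℕ) (hib : i ≤ (y⁻¹ 0).val) : rk y i (i + 1) = 0 := by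
  rw [rk, Finset.card_eq_zero, Finset.filter_eq_empty_iff]
  intro a _
  intro hcon
  have := grass_pos hc2 a (by omega)
  omega

lemma grass_beta1 {z : Equiv.Perm (Fin (n+1))} (hz : DotLE z y) :
    ∀ c : Fin (n+1), c.val < (y⁻¹ 0).val → (z c).val ≤ c.val + 1 := by
  intro c hc
  have h1 := hz (c.val + 1) (c.val + 2)
  have h2 : rk y (c.val + 1) (c.val + 2) = 0 := grass_rk_empty hc2 (c.val + 1) (by omega)
  have h3 : rk z (c.val + 1) (c.val + 2) = 0 := by omega
  rw [rk, Finset.card_eq_zero, Finset.filter_eq_empty_iff] at h3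
  have h4 := h3 (Finset.mem_univ c)
  by_contra hcon
  exact h4 ⟨by omega, by omega⟩

lemma grass_beta2 {z : Equiv.Perm (Fin (n+1))} (hz : DotLE z y) {p : ℕ}
    (hz0 : (z⁻¹ 0).val = p) :
    ∀ i j : ℕ, p < i → i ≤ (y⁻¹ 0).val → 1 ≤ j → j ≤ p + 1 → rk z i j + j ≤ i := by
  intro i j hpi hib hj1 hjp
  by_contra hcon
  push_neg at hcon
  have hScard : i + 1 ≤ rk z i j + j := hcon
  set S := Finset.univ.filter (fun a : Fin (n+1) => a.val < i ∧ j ≤ (z a).val) with hS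
  have hSrk : S.card = rk z i j := rfl
  have himg : S.image (fun a => (z a).val) = Finset.Icc j i := by
    apply Finset.eq_of_subset_of_card_le
    · intro v hv
      rw [Finset.mem_image] at hv
      obtain ⟨a, ha, hav⟩ := hv
      rw [hS, Finset.mem_filter] at ha
      obtain ⟨-, hai, hja⟩ := ha
      have := grass_beta1 hc2 hz a (by omega)
      rw [Finset.mem_Icc]
      omega
    · rw [Finset.card_image_of_injOn (fun a _ b _ hab => z.injective (Fin.ext hab))]
      rw [Nat.card_Icc]
      omega
  have hsurj : ∀ v : ℕ, j ≤ v → v ≤ i → ∃ a : Fin (n+1),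
      (a.val < i ∧ j ≤ (z a).val) ∧ (z a).val = v := by
    intro v h1 h2
    have : v ∈ Finset.Icc j i := Finset.mem_Icc.mpr ⟨h1, h2⟩
    rw [← himg, Finset.mem_image] at this
    obtain ⟨a, ha, hav⟩ := this
    rw [hS, Finset.mem_filter] at ha
    exact ⟨a, ⟨ha.2.1, ha.2.2⟩, hav⟩
  have haux : ∀ (d : ℕ) (v : ℕ) (hv : v < n + 1), j ≤ v → v ≤ i → i ≤ v + d →
      (z⁻¹ (⟨v, hv⟩ : Fin (n+1))).val + 1 = v := by
    intro d
    induction d with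
    | zero =>
        intro v hv hjv hvi hd
        obtain ⟨a, ⟨hai, hja⟩, hza⟩ := hsurj v hjv hvi
        have hb1 := grass_beta1 hc2 hz a (by omega)
        have hzaeq : z a = ⟨v, hv⟩ := Fin.ext hza
        have hinva : z⁻¹ (⟨v, hv⟩ : Fin (n+1)) = a := by
          rw [← hzaeq, Equiv.Perm.inv_apply_self]
        rw [hinva]
        omega
    | succ d ih =>
        intro v hv hjv hvi hd
        obtain ⟨a, ⟨hai, hja⟩, hza⟩ := hsurj v hjv hvi
        have hb1 := grass_beta1 hc2 hz a (by omega)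
        have hzaeq : z a = ⟨v, hv⟩ := Fin.ext hza
        have hinva : z⁻¹ (⟨v, hv⟩ : Fin (n+1)) = a := by
          rw [← hzaeq, Equiv.Perm.inv_apply_self]
        by_cases hav : a.val + 1 = v
        · rw [hinva]; omega
        · exfalso
          have hage : v ≤ a.val := by omega
          have hvlti : v < i := by omega
          have hult : a.val + 1 < n + 1 := by
            have h5 := (y⁻¹ 0).isLt
            omega
          have ihu := ih (a.val + 1) hult (by omega) (by omega) (by omega)
          have : z⁻¹ (⟨a.val + 1, hult⟩ : Fin (n+1)) = a := Fin.ext (by omega)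
          have h6 := congrArg z this
          rw [z.apply_inv_self, hzaeq] at h6
          have := congrArg Fin.val h6
          simp only at this
          omega
  have hfin := haux (i - (p+1)) (p+1) (by have := (y⁻¹ 0).isLt; omega) hjp (by omega) (by omega)
  have : z⁻¹ (⟨p+1, _⟩ : Fin (n+1)) = z⁻¹ 0 := Fin.ext (by rw [hz0]; omega)
  have h7 := z⁻¹.injective this
  have := congrArg Fin.val h7
  simp only [Fin.val_zero] at this
  omega

/-- the maximum for the base case -/
lemma base_max (p : ℕ) (hp : p ≤ (y⁻¹ 0).val) :
    ∃ c : Equiv.Perm (Fin (n+1)), DotLE c y ∧ (c⁻¹ 0).val = p ∧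
      ∀ z, DotLE z y → (z⁻¹ 0).val = p → DotLE z c := by
  by_cases hpq : p = (y⁻¹ 0).val
  · exact ⟨y, DotLE.refl y, hpq.symm, fun z hzy _ => hzy⟩
  have hplt : p < (y⁻¹ 0).val := lt_of_le_of_ne hp hpq
  have hpltn : p < n + 1 := by have := (y⁻¹ 0).isLt; omega
  set pF : Fin (n+1) := ⟨p, hpltn⟩ with hpF
  set q := y⁻¹ 0 with hq
  set d := y * Equiv.swap pF q with hd
  have hpFq : pF ≠ q := fun h => by
    have := congrArg Fin.val h
    simp [hpF] at this
    omega
  have hd1 : d pF = 0 := by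
    rw [hd, Equiv.Perm.mul_apply, Equiv.swap_apply_left, hq, y.apply_inv_self]
  have hd2 : (d q).val = p + 1 := by
    rw [hd, Equiv.Perm.mul_apply, Equiv.swap_apply_right]
    exact grass_pos hc2 pF hplt
  have hd1v : (d pF).val = 0 := by rw [hd1]; rfl
  have hdpq : pF.val < q.val := hplt
  have hdval : (d pF).val < (d q).val := by omega
  have hdsw : d * Equiv.swap pF q = y := by
    rw [hd, mul_assoc, Equiv.swap_mul_self, mul_one]
  have hband : ∀ i j : ℕ, rk y i j = rk d i j +
      (if pF.val < i ∧ i ≤ q.val ∧ (d pF).val < j ∧ j ≤ (d q).val then 1 else 0) := by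
    intro i j
    have := rk_mul_swap d pF q hdpq hdval i j
    rw [hdsw] at this
    exact this
  have hdpos : (d⁻¹ 0).val = p := by
    have : d⁻¹ 0 = Equiv.swap pF q (y⁻¹ 0) := by
      rw [hd, mul_inv_rev, Equiv.Perm.mul_apply, Equiv.swap_inv]
    rw [← hq] at this
    rw [this, Equiv.swap_apply_right]
  refine ⟨d, ?_, hdpos, ?_⟩
  · intro i j
    have := hband i j
    omega
  · intro z hzy hz0
    intro i j
    have hb := hband i j
    by_cases hbandc : pF.val < i ∧ i ≤ q.val ∧ (d pF).val < j ∧ j ≤ (d q).val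
    · rw [if_pos hbandc] at hb
      obtain ⟨hb1, hb2, hb3, hb4⟩ := hbandc
      have hppi : p < i := hb1
      have h1 := grass_beta2 hc2 hzy hz0 i j hppi hb2 (by omega) (by omega)
      have h2 := grass_rk hc2 i j (by omega) (by omega) hb2
      omega
    · rw [if_neg hbandc] at hb
      have := hzy i j
      omega

end Grass2

/-! ### existence of the maximum of `{z ≤ y : z⁻¹ 0 = p}` -/

lemma max_exists : ∀ (N : ℕ) (y : Equiv.Perm (Fin (n+1))), invCount y ≤ N →
    ∀ p : ℕ, p ≤ (y⁻¹ 0).val →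
    ∃ c, DotLE c y ∧ (c⁻¹ 0).val = p ∧ ∀ z, DotLE z y → (z⁻¹ 0).val = p → DotLE z c := by
  intro N
  induction N with
  | zero =>
      intro y hN p hp
      by_cases hdesc : ∃ aa bb : Fin (n+1), 0 < aa.val ∧ aa.val + 1 = bb.val ∧
          (y⁻¹ bb).val < (y⁻¹ aa).val
      · obtain ⟨aa, bb, ha0, habv, hdes⟩ := hdesc
        have := invCount_desc habv hdes
        omega
      · push_neg at hdesc
        apply base_max _ p hp
        intro v w h0 hab
        have h1 := hdesc v w h0 hab
        have h2 : y⁻¹ v ≠ y⁻¹ w := fun h => by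
          have := y⁻¹.injective h
          rw [this] at hab
          omega
        have h3 : (y⁻¹ v).val ≠ (y⁻¹ w).val := fun h => h2 (Fin.ext h)
        omega
  | succ N ih =>
      intro y hN p hp
      by_cases hdesc : ∃ aa bb : Fin (n+1), 0 < aa.val ∧ aa.val + 1 = bb.val ∧
          (y⁻¹ bb).val < (y⁻¹ aa).val
      · obtain ⟨aa, bb, ha0, habv, hdes⟩ := hdesc
        have haabb : aa ≠ bb := fun h => by rw [h] at habv; omega
        have h0a : (0 : Fin (n+1)) ≠ aa := fun h => by
          have := congrArg Fin.val h
          simp only [Fin.val_zero] at this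
          omega
        have h0b : (0 : Fin (n+1)) ≠ bb := fun h => by
          have := congrArg Fin.val h
          simp only [Fin.val_zero] at this
          omega
        have hy'0 : (Equiv.swap aa bb * y)⁻¹ 0 = y⁻¹ 0 := inv_swap_left_other y 0 h0a h0b
        have hinv' : invCount (Equiv.swap aa bb * y) < invCount y := invCount_desc habv hdes
        obtain ⟨c', hc'y, hc'p, hc'max⟩ := ih (Equiv.swap aa bb * y) (by omega) p
          (by rw [hy'0]; exact hp)
        have hy'a : ((Equiv.swap aa bb * y)⁻¹ aa).val < ((Equiv.swap aa bb * y)⁻¹ bb).val := by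
          rw [inv_swap_left_a, inv_swap_left_b]
          exact hdes
        by_cases hdc : (c'⁻¹ bb).val < (c'⁻¹ aa).val
        · -- c' has the descent: c' itself is the max
          refine ⟨c', DotLE.trans hc'y (desc_le habv hdes), hc'p, ?_⟩
          intro z hzy hzp
          by_cases hdz : (z⁻¹ bb).val < (z⁻¹ aa).val
          · have hsz_y' : DotLE (Equiv.swap aa bb * z) (Equiv.swap aa bb * y) :=
              lift_a habv hdes hdz hzy
            have hszp : ((Equiv.swap aa bb * z)⁻¹ 0).val = p := by
              rw [inv_swap_left_other z 0 h0a h0b]; exact hzp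
            have hsz_c' := hc'max _ hsz_y' hszp
            have hasz : ((Equiv.swap aa bb * z)⁻¹ aa).val
                < ((Equiv.swap aa bb * z)⁻¹ bb).val := by
              rw [inv_swap_left_a, inv_swap_left_b]; exact hdz
            have h1 : DotLE (Equiv.swap aa bb * z) (Equiv.swap aa bb * c') :=
              lift_b habv hdc hasz hsz_c'
            have h2 := lift_a' habv hasz
              (by rw [inv_swap_left_a, inv_swap_left_b]; exact hdc) h1
            rw [swap_swap_left, swap_swap_left] at h2
            exact h2
          · have hne : (z⁻¹ aa).val ≠ (z⁻¹ bb).val := fun h =>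
              haabb (z⁻¹.injective (Fin.ext h))
            have hza : (z⁻¹ aa).val < (z⁻¹ bb).val := by omega
            exact hc'max z (lift_b habv hdes hza hzy) hzp
        · -- c' has the ascent: swap it up
          have hnec : (c'⁻¹ aa).val ≠ (c'⁻¹ bb).val := fun h =>
            haabb (c'⁻¹.injective (Fin.ext h))
          have hac : (c'⁻¹ aa).val < (c'⁻¹ bb).val := by omega
          refine ⟨Equiv.swap aa bb * c', ?_, ?_, ?_⟩
          · have h1 := lift_a' habv hac hy'a hc'y
            rw [swap_swap_left] at h1
            exact h1
          · rw [inv_swap_left_other c' 0 h0a h0b]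
            exact hc'p
          · intro z hzy hzp
            by_cases hdz : (z⁻¹ bb).val < (z⁻¹ aa).val
            · have hsz_y' : DotLE (Equiv.swap aa bb * z) (Equiv.swap aa bb * y) :=
                lift_a habv hdes hdz hzy
              have hszp : ((Equiv.swap aa bb * z)⁻¹ 0).val = p := by
                rw [inv_swap_left_other z 0 h0a h0b]; exact hzp
              have hsz_c' := hc'max _ hsz_y' hszp
              have hasz : ((Equiv.swap aa bb * z)⁻¹ aa).val
                  < ((Equiv.swap aa bb * z)⁻¹ bb).val := by
                rw [inv_swap_left_a, inv_swap_left_b]; exact hdz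
              have h1 := lift_a' habv hasz hac hsz_c'
              rw [swap_swap_left] at h1
              exact h1
            · have hne : (z⁻¹ aa).val ≠ (z⁻¹ bb).val := fun h =>
                haabb (z⁻¹.injective (Fin.ext h))
              have hza : (z⁻¹ aa).val < (z⁻¹ bb).val := by omega
              have h1 := hc'max z (lift_b habv hdes hza hzy) hzp
              exact DotLE.trans h1 (asc_le habv hac)
      · push_neg at hdesc
        apply base_max _ p hp
        intro v w h0 hab
        have h1 := hdesc v w h0 hab
        have h2 : y⁻¹ v ≠ y⁻¹ w := fun h => by
          have := y⁻¹.injective h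
          rw [this] at hab
          omega
        have h3 : (y⁻¹ v).val ≠ (y⁻¹ w).val := fun h => h2 (Fin.ext h)
        omega

end CosetIv


open CosetIv

/-- for `x ≤ y` in `S_{n+1}`, the set
`L = {z ∈ [x,y] : z⁻¹(0) = x⁻¹(0)}` is a lower order ideal of `[x, y]` of the form
`[x, c]`: it has a (unique) maximal element `c` and `L = {z ∈ [x,y] : z ≤ c}`. -/
theorem coset_intersection_is_subinterval (n : ℕ) (x y : Equiv.Perm (Fin (n + 1)))
    (hxy : BruhatLE x y) :
    ∃ c : Equiv.Perm (Fin (n + 1)),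
      BruhatLE x c ∧ BruhatLE c y ∧ c⁻¹ 0 = x⁻¹ 0 ∧
      ∀ z : Equiv.Perm (Fin (n + 1)),
        (BruhatLE x z ∧ BruhatLE z y ∧ z⁻¹ 0 = x⁻¹ 0) ↔ (BruhatLE x z ∧ BruhatLE z c) := by
  have hdxy := dotLE_of_bruhatLE hxy
  have hp : (x⁻¹ 0).val ≤ (y⁻¹ 0).val := pos_zero_le_of_dotLE hdxy
  obtain ⟨c, hcy, hcp, hcmax⟩ := max_exists (invCount y) y le_rfl ((x⁻¹ 0).val) hp
  have hxc : DotLE x c := hcmax x hdxy rfl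
  refine ⟨c, bruhatLE_of_dotLE hxc, bruhatLE_of_dotLE hcy, Fin.ext hcp, ?_⟩
  intro z
  constructor
  · rintro ⟨hxz, hzy, hz0⟩
    refine ⟨hxz, bruhatLE_of_dotLE (hcmax z (dotLE_of_bruhatLE hzy) ?_)⟩
    rw [hz0]
  · rintro ⟨hxz, hzc⟩
    refine ⟨hxz, Relation.ReflTransGen.trans hzc (bruhatLE_of_dotLE hcy), ?_⟩
    have h1 := pos_zero_le_of_dotLE (dotLE_of_bruhatLE hxz)
    have h2 := pos_zero_le_of_dotLE (dotLE_of_bruhatLE hzc)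
    exact Fin.ext (by omega)
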